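/- Let λ ∈ [0,1] and let A : [0,1] → ℝ be a convex function with max{t, 1−t} ≤ A(t) ≤ 1 for all t ∈ [0,1] and A(1/2) = 1 − λ/2. Then 12∫₀¹ dt/(A(t)+1)² − 3 ≥ 3λ/(4 − λ), with equality for A(t) = 1 − λ·min{t, 1−t}. (Lower bound on Spearman's ρ of an extreme value copula with upper tail dependence coefficient λ.) -/

import Mathlib

open MeasureTheory Filter Set Real

noncomputable section

lemma pos_den (lam t : ℝ) (h0 : 0 ≤ lam) (h1 : lam ≤ 1) :
    (3:ℝ)/2 ≤ (1 - lam * min t (1 - t)) + 1 := by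
  have hmin : min t (1 - t) ≤ 1/2 := by
    rcases le_total t (1-t) with h | h
    · rw [min_eq_left h]; linarith
    · rw [min_eq_right h]; linarith
  nlinarith [mul_le_mul_of_nonneg_left hmin h0]

lemma contB (lam : ℝ) (h0 : 0 ≤ lam) (h1 : lam ≤ 1) :
    Continuous (fun t : ℝ => 1 / ((1 - lam * min t (1 - t)) + 1) ^ 2) := by
  apply Continuous.div continuous_const
  · exact ((continuous_const.sub (continuous_const.mul
      (continuous_id.min (continuous_const.sub continuous_id)))).add continuous_const).pow 2
  · intro t
    have := pos_den lam t h0 h1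
    positivity

lemma derivG (lam t : ℝ) (h : 2 - lam * t ≠ 0) :
    HasDerivAt (fun x : ℝ => x / (4 - 2 * lam * x)) (1 / (2 - lam * t) ^ 2) t := by
  have hd : (4 : ℝ) - 2 * lam * t ≠ 0 := by
    intro h'; apply h; linarith
  have h1 : HasDerivAt (fun x : ℝ => x / (4 - 2 * lam * x))
      ((1 * (4 - 2 * lam * t) - t * (0 - 2 * lam * 1)) / (4 - 2 * lam * t) ^ 2) t :=
    (hasDerivAt_id t).div ((hasDerivAt_const t 4).sub
      (((hasDerivAt_id t).const_mul (2 * lam)))) hd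
  convert h1 using 1
  field_simp
  ring

lemma derivH (lam t : ℝ) (h : 2 - lam * (1 - t) ≠ 0) :
    HasDerivAt (fun x : ℝ => -((1 - x) / (4 - 2 * lam * (1 - x))))
      (1 / (2 - lam * (1 - t)) ^ 2) t := by
  have := (derivG lam (1 - t) h).comp t ((hasDerivAt_const t 1).sub (hasDerivAt_id t))
  have h2 := this.neg
  refine h2.congr_deriv ?_
  ring

lemma Bint (lam : ℝ) (h0 : 0 ≤ lam) (h1 : lam ≤ 1) :
    (∫ t in (0:ℝ)..1, 1 / ((1 - lam * min t (1 - t)) + 1) ^ 2) = 1 / (4 - lam) := by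
  have hden : ∀ t : ℝ, 2 - lam * min t (1 - t) ≠ 0 := by
    intro t; have := pos_den lam t h0 h1; intro h; rw [show (1 - lam * min t (1-t)) + 1 = 2 - lam * min t (1-t) by ring] at this; linarith
  have hc := contB lam h0 h1
  have hint : ∀ a b : ℝ, IntervalIntegrable (fun t : ℝ => 1 / ((1 - lam * min t (1 - t)) + 1) ^ 2) volume a b :=
    fun a b => hc.intervalIntegrable a b
  have hsplit := intervalIntegral.integral_add_adjacent_intervals (hint 0 (1/2)) (hint (1/2) 1)
  rw [← hsplit]
  have e1 : (∫ t in (0:ℝ)..(1/2), 1 / ((1 - lam * min t (1 - t)) + 1) ^ 2)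
      = ∫ t in (0:ℝ)..(1/2), 1 / (2 - lam * t) ^ 2 := by
    apply intervalIntegral.integral_congr
    intro t ht
    rw [Set.uIcc_of_le (by norm_num : (0:ℝ) ≤ 1/2)] at ht
    have h : min t (1 - t) = t := min_eq_left (by linarith [ht.1, ht.2])
    show 1 / ((1 - lam * min t (1 - t)) + 1) ^ 2 = 1 / (2 - lam * t) ^ 2
    rw [h]; ring_nf
  have e2 : (∫ t in (1/2:ℝ)..1, 1 / ((1 - lam * min t (1 - t)) + 1) ^ 2)
      = ∫ t in (1/2:ℝ)..1, 1 / (2 - lam * (1 - t)) ^ 2 := by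
    apply intervalIntegral.integral_congr
    intro t ht
    rw [Set.uIcc_of_le (by norm_num : (1/2:ℝ) ≤ 1)] at ht
    have h : min t (1 - t) = 1 - t := min_eq_right (by linarith [ht.1, ht.2])
    show 1 / ((1 - lam * min t (1 - t)) + 1) ^ 2 = 1 / (2 - lam * (1 - t)) ^ 2
    rw [h]; ring_nf
  have hne : ∀ t ∈ Set.Icc (0:ℝ) (1/2), 2 - lam * t ≠ 0 := by
    intro t ht h
    nlinarith [mul_le_mul_of_nonneg_left ht.2 h0]
  have hne2 : ∀ t ∈ Set.Icc (1/2:ℝ) 1, 2 - lam * (1 - t) ≠ 0 := by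
    intro t ht h
    nlinarith [mul_le_mul_of_nonneg_left (show 1 - t ≤ 1/2 by linarith [ht.1]) h0]
  have v1 : (∫ t in (0:ℝ)..(1/2), 1 / (2 - lam * t) ^ 2)
      = (1/2) / (4 - 2 * lam * (1/2)) - 0 / (4 - 2 * lam * 0) := by
    apply intervalIntegral.integral_eq_sub_of_hasDerivAt (f := fun x : ℝ => x / (4 - 2 * lam * x))
    · intro t ht
      rw [Set.uIcc_of_le (by norm_num : (0:ℝ) ≤ 1/2)] at ht
      exact derivG lam t (hne t ht)
    · apply ContinuousOn.intervalIntegrable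
      apply ContinuousOn.div continuousOn_const
      · fun_prop
      · intro t ht
        rw [Set.uIcc_of_le (by norm_num : (0:ℝ) ≤ 1/2)] at ht
        exact pow_ne_zero 2 (hne t ht)
  have v2 : (∫ t in (1/2:ℝ)..1, 1 / (2 - lam * (1 - t)) ^ 2)
      = -((1 - 1) / (4 - 2 * lam * (1 - 1))) - -((1 - 1/2) / (4 - 2 * lam * (1 - 1/2))) := by
    apply intervalIntegral.integral_eq_sub_of_hasDerivAt (f := fun x : ℝ => -((1 - x) / (4 - 2 * lam * (1 - x))))
    · intro t ht
      rw [Set.uIcc_of_le (by norm_num : (1/2:ℝ) ≤ 1)] at ht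
      exact derivH lam t (hne2 t ht)
    · apply ContinuousOn.intervalIntegrable
      apply ContinuousOn.div continuousOn_const
      · fun_prop
      · intro t ht
        rw [Set.uIcc_of_le (by norm_num : (1/2:ℝ) ≤ 1)] at ht
        exact pow_ne_zero 2 (hne2 t ht)
  rw [e1, e2, v1, v2]
  have h4 : (4:ℝ) - lam ≠ 0 := by linarith
  have h8 : (8:ℝ) - lam * 2 ≠ 0 := by linarith
  field_simp
  norm_num
  field_simp
  norm_num

theorem stmt_7 (lam : ℝ) (hlam : lam ∈ Set.Icc (0:ℝ) 1) (A : ℝ → ℝ)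
    (hconv : ConvexOn ℝ (Set.Icc (0:ℝ) 1) A)
    (hbd : ∀ t ∈ Set.Icc (0:ℝ) 1, max t (1 - t) ≤ A t ∧ A t ≤ 1)
    (hmid : A (1 / 2) = 1 - lam / 2) :
    3 * lam / (4 - lam) ≤ 12 * (∫ t in (0:ℝ)..1, 1 / (A t + 1) ^ 2) - 3 ∧
    12 * (∫ t in (0:ℝ)..1, 1 / ((1 - lam * min t (1 - t)) + 1) ^ 2) - 3
      = 3 * lam / (4 - lam) := by
  obtain ⟨h0, h1⟩ := hlam
  have hB := Bint lam h0 h1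
  have h4 : (4:ℝ) - lam ≠ 0 := by linarith
  constructor
  · -- A ≤ B on Icc 0 1
    have hAB : ∀ t ∈ Set.Icc (0:ℝ) 1, A t ≤ 1 - lam * min t (1 - t) := by
      intro t ht
      rcases le_total t (1/2) with h | h
      · have hmin : min t (1 - t) = t := min_eq_left (by linarith [ht.1])
        rw [hmin]
        have hcx := hconv.2 (show (0:ℝ) ∈ Set.Icc (0:ℝ) 1 by norm_num)
          (show (1/2:ℝ) ∈ Set.Icc (0:ℝ) 1 by norm_num)
          (show (0:ℝ) ≤ 1 - 2*t by linarith) (show (0:ℝ) ≤ 2*t by linarith [ht.1])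
          (by ring)
        simp only [smul_eq_mul] at hcx
        have heq : (1 - 2*t) * 0 + 2*t * (1/2 : ℝ) = t := by ring
        rw [heq] at hcx
        have hA0 : A 0 ≤ 1 := (hbd 0 (by norm_num)).2
        rw [hmid] at hcx
        nlinarith [mul_le_mul_of_nonneg_left hA0 (show (0:ℝ) ≤ 1 - 2*t by linarith)]
      · have hmin : min t (1 - t) = 1 - t := min_eq_right (by linarith)
        rw [hmin]
        have hcx := hconv.2 (show (1/2:ℝ) ∈ Set.Icc (0:ℝ) 1 by norm_num)
          (show (1:ℝ) ∈ Set.Icc (0:ℝ) 1 by norm_num)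
          (show (0:ℝ) ≤ 2 - 2*t by linarith [ht.2]) (show (0:ℝ) ≤ 2*t - 1 by linarith)
          (by ring)
        simp only [smul_eq_mul] at hcx
        have heq : (2 - 2*t) * (1/2:ℝ) + (2*t - 1) * 1 = t := by ring
        rw [heq] at hcx
        have hA1 : A 1 ≤ 1 := (hbd 1 (by norm_num)).2
        rw [hmid] at hcx
        nlinarith [mul_le_mul_of_nonneg_left hA1 (show (0:ℝ) ≤ 2*t - 1 by linarith)]
    -- A + 1 ≥ 3/2 on Icc
    have hAlow : ∀ t ∈ Set.Icc (0:ℝ) 1, (3:ℝ)/2 ≤ A t + 1 := by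
      intro t ht
      have h' := (hbd t ht).1
      have hmax : (1:ℝ)/2 ≤ max t (1 - t) := by
        rcases le_total t (1 - t) with h | h
        · exact le_max_of_le_right (by linarith)
        · exact le_max_of_le_left (by linarith)
      linarith
    -- integrability of g_A
    have hcont : ContinuousOn A (Set.Ioo (0:ℝ) 1) := by
      have := hconv.continuousOn_interior
      rwa [interior_Icc] at this
    have hgcont : ContinuousOn (fun t => 1 / (A t + 1) ^ 2) (Set.Ioo (0:ℝ) 1) := by
      apply ContinuousOn.div continuousOn_const
      · exact ((hcont.add continuousOn_const).pow 2)
      · intro t ht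
        have := hAlow t (Set.Ioo_subset_Icc_self ht)
        positivity
    have hintA : IntervalIntegrable (fun t => 1 / (A t + 1) ^ 2) volume 0 1 := by
      rw [intervalIntegrable_iff_integrableOn_Ioc_of_le (by norm_num : (0:ℝ) ≤ 1)]
      rw [integrableOn_Ioc_iff_integrableOn_Ioo]
      have hmeas : AEStronglyMeasurable (fun t => 1 / (A t + 1) ^ 2)
          (volume.restrict (Set.Ioo (0:ℝ) 1)) :=
        hgcont.aestronglyMeasurable measurableSet_Ioo
      apply Integrable.mono' (integrable_const ((4:ℝ)/9)) hmeas
      filter_upwards [ae_restrict_mem measurableSet_Ioo] with t ht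
      have h32 := hAlow t (Set.Ioo_subset_Icc_self ht)
      rw [Real.norm_eq_abs, abs_of_nonneg (by positivity)]
      rw [div_le_div_iff₀ (by positivity) (by norm_num)]
      nlinarith
    have hintB : IntervalIntegrable (fun t : ℝ => 1 / ((1 - lam * min t (1 - t)) + 1) ^ 2) volume 0 1 :=
      (contB lam h0 h1).intervalIntegrable 0 1
    have hmono : (∫ t in (0:ℝ)..1, 1 / ((1 - lam * min t (1 - t)) + 1) ^ 2)
        ≤ ∫ t in (0:ℝ)..1, 1 / (A t + 1) ^ 2 := by
      apply intervalIntegral.integral_mono_on (by norm_num) hintB hintA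
      intro t ht
      have hab := hAB t ht
      have h32 := hAlow t ht
      apply div_le_div_of_nonneg_left (by norm_num) (by positivity)
      have : A t + 1 ≤ (1 - lam * min t (1 - t)) + 1 := by linarith
      nlinarith
    rw [hB] at hmono
    have key : 3 * lam / (4 - lam) = 12 * (1 / (4 - lam)) - 3 := by
      field_simp
      ring
    rw [key]
    linarith
  · rw [hB]
    field_simp
    ring
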